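/- For every real x > 0, √(2π) · x^{x+1/2} · e^{-x} < Γ(x+1) < √(2π) · x^{x+1/2} · e^{-x + 1/(12x)}. -/

import Mathlib

open Real Filter


lemma artanh_lb {t : ℝ} (ht : 0 < t) (ht1 : t < 1) :
    2*t + (2/3)*t^3 < Real.log (1+t) - Real.log (1-t) := by
  set φ : ℝ → ℝ := fun t => Real.log (1+t) - Real.log (1-t) - 2*t - (2/3)*t^3 with hφ
  have key : StrictMonoOn φ (Set.Ico 0 1) := by
    apply strictMonoOn_of_deriv_pos (convex_Ico 0 1)
    · apply ContinuousOn.sub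
      apply ContinuousOn.sub
      apply ContinuousOn.sub
      · exact (continuousOn_const.add continuousOn_id).log (fun x hx => by
          simp only [Set.mem_Ico] at hx; simp only [Pi.add_apply, Pi.sub_apply, id_eq]; intro h; linarith [hx.1])
      · exact (continuousOn_const.sub continuousOn_id).log (fun x hx => by
          simp only [Set.mem_Ico] at hx; simp only [Pi.add_apply, Pi.sub_apply, id_eq]; intro h; linarith [hx.2])
      · fun_prop
      · fun_prop
    · intro x hx
      rw [interior_Ico, Set.mem_Ioo] at hx
      have h1 : (1:ℝ)+x ≠ 0 := by nlinarith [hx.1]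
      have h2 : (1:ℝ)-x ≠ 0 := by nlinarith [hx.2]
      have hd : HasDerivAt φ (1/(1+x) - (-1)/(1-x) - 2 - (2/3)*(3*x^2)) x := by
        have d1 : HasDerivAt (fun t : ℝ => Real.log (1+t)) (1/(1+x)) x := by
          simpa using ((hasDerivAt_id x).const_add 1).log h1
        have d2 : HasDerivAt (fun t : ℝ => Real.log (1-t)) ((-1)/(1-x)) x := by
          simpa using ((hasDerivAt_id x).const_sub 1).log h2
        have d3 : HasDerivAt (fun t : ℝ => 2*t) 2 x := by
          simpa using (hasDerivAt_id x).const_mul 2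
        have d4 : HasDerivAt (fun t : ℝ => (2/3)*t^3) ((2/3)*(3*x^2)) x := by
          simpa using (hasDerivAt_pow 3 x).const_mul (2/3)
        exact ((d1.sub d2).sub d3).sub d4
      rw [hd.deriv]
      have h1' : (0:ℝ) < 1+x := by linarith [hx.1]
      have h2' : (0:ℝ) < 1-x := by linarith [hx.2]
      have hx0 : x ≠ 0 := ne_of_gt hx.1
      have : 1/(1+x) - (-1)/(1-x) - 2 - 2/3*(3*x^2) = 2*x^4/((1+x)*(1-x)) := by
        field_simp; ring
      rw [this]
      positivity
  have h0 : φ 0 = 0 := by simp [hφ]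
  have := key (Set.mem_Ico.2 ⟨le_refl 0, by norm_num⟩) (Set.mem_Ico.2 ⟨ht.le, ht1⟩) ht
  rw [h0] at this
  simp only [hφ] at this
  linarith

lemma artanh_ub {t : ℝ} (ht : 0 < t) (ht1 : t < 1) :
    Real.log (1+t) - Real.log (1-t) < 2*t + (2/3)*t^3/(1-t^2) := by
  set ψ : ℝ → ℝ := fun t => 2*t + (2/3)*t^3/(1-t^2) - (Real.log (1+t) - Real.log (1-t)) with hψ
  have key : StrictMonoOn ψ (Set.Ico 0 1) := by
    apply strictMonoOn_of_deriv_pos (convex_Ico 0 1)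
    · apply ContinuousOn.sub
      · apply ContinuousOn.add
        · fun_prop
        · apply ContinuousOn.div
          · fun_prop
          · fun_prop
          · intro x hx; simp only [Set.mem_Ico] at hx; nlinarith [hx.1, hx.2]
      · apply ContinuousOn.sub
        · exact (continuousOn_const.add continuousOn_id).log (fun x hx => by
            simp only [Set.mem_Ico] at hx; simp only [Pi.add_apply, Pi.sub_apply, id_eq]; intro h; linarith [hx.1])
        · exact (continuousOn_const.sub continuousOn_id).log (fun x hx => by
            simp only [Set.mem_Ico] at hx; simp only [Pi.add_apply, Pi.sub_apply, id_eq]; intro h; linarith [hx.2])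
    · intro x hx
      rw [interior_Ico, Set.mem_Ioo] at hx
      have h1' : (0:ℝ) < 1+x := by linarith [hx.1]
      have h2' : (0:ℝ) < 1-x := by linarith [hx.2]
      have h3' : (0:ℝ) < 1-x^2 := by nlinarith
      have hd : HasDerivAt ψ
          (2 + ((2/3)*(3*x^2)*(1-x^2) - (2/3)*x^3*(-(2*x)))/(1-x^2)^2
            - (1/(1+x) - (-1)/(1-x))) x := by
        have d1 : HasDerivAt (fun t : ℝ => Real.log (1+t)) (1/(1+x)) x := by
          simpa using ((hasDerivAt_id x).const_add 1).log h1'.ne'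
        have d2 : HasDerivAt (fun t : ℝ => Real.log (1-t)) ((-1)/(1-x)) x := by
          simpa using ((hasDerivAt_id x).const_sub 1).log h2'.ne'
        have d3 : HasDerivAt (fun t : ℝ => 2*t) 2 x := by
          simpa using (hasDerivAt_id x).const_mul 2
        have dnum : HasDerivAt (fun t : ℝ => (2/3)*t^3) ((2/3)*(3*x^2)) x := by
          simpa using (hasDerivAt_pow 3 x).const_mul (2/3)
        have dden : HasDerivAt (fun t : ℝ => 1-t^2) (-(2*x)) x := by
          simpa using (hasDerivAt_pow 2 x).const_sub 1
        have d4 := dnum.div dden h3'.ne'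
        exact (d3.add d4).sub (d1.sub d2)
      rw [hd.deriv]
      have hx0 : x ≠ 0 := ne_of_gt hx.1
      have : 2 + ((2/3)*(3*x^2)*(1-x^2) - (2/3)*x^3*(-(2*x)))/(1-x^2)^2
            - (1/(1+x) - (-1)/(1-x)) = (4/3)*x^4/(1-x^2)^2 := by
        field_simp; ring
      rw [this]
      positivity
  have h0 : ψ 0 = 0 := by simp [hψ]
  have := key (Set.mem_Ico.2 ⟨le_refl 0, by norm_num⟩) (Set.mem_Ico.2 ⟨ht.le, ht1⟩) ht
  rw [h0] at this
  simp only [hψ] at this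
  linarith

noncomputable def sgf (y : ℝ) : ℝ := (y + 1/2) * (Real.log (y+1) - Real.log y) - 1

lemma sgf_bounds {y : ℝ} (hy : 0 < y) :
    0 < sgf y ∧ sgf y < 1/(12*y) - 1/(12*(y+1)) := by
  set t : ℝ := 1/(2*y+1) with htdef
  have h2y : (0:ℝ) < 2*y+1 := by linarith
  have ht : 0 < t := by positivity
  have ht1 : t < 1 := by rw [htdef, div_lt_one h2y]; linarith
  have hlog : Real.log (y+1) - Real.log y = Real.log (1+t) - Real.log (1-t) := by
    have e1 : 1+t = (2*y+2)/(2*y+1) := by rw [htdef]; field_simp; ring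
    have e2 : 1-t = (2*y)/(2*y+1) := by rw [htdef]; field_simp; ring
    rw [e1, e2, Real.log_div (by linarith) (by linarith), Real.log_div (by positivity) (by linarith)]
    have e3 : (2*y+2 : ℝ) = 2*(y+1) := by ring
    have e4 : (2*y : ℝ) = 2*y := rfl
    rw [e3, Real.log_mul two_ne_zero (by linarith), Real.log_mul two_ne_zero (by linarith)]
    ring
  have hyt : y + 1/2 = 1/(2*t) := by rw [htdef]; field_simp
  constructor
  · have := artanh_lb ht ht1
    rw [sgf, hlog, hyt]
    have : 1/(2*t) * (Real.log (1+t) - Real.log (1-t)) > 1/(2*t) * (2*t + (2/3)*t^3) := by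
      apply mul_lt_mul_of_pos_left this (by positivity)
    have he : 1/(2*t) * (2*t + (2/3)*t^3) = 1 + t^2/3 := by field_simp
    nlinarith [sq_nonneg t]
  · have := artanh_ub ht ht1
    rw [sgf, hlog, hyt]
    have hlt : 1/(2*t) * (Real.log (1+t) - Real.log (1-t)) < 1/(2*t) * (2*t + (2/3)*t^3/(1-t^2)) :=
      mul_lt_mul_of_pos_left this (by positivity)
    have h1t2 : 1 - t^2 > 0 := by nlinarith
    have he : 1/(2*t) * (2*t + (2/3)*t^3/(1-t^2)) = 1 + t^2/(3*(1-t^2)) := by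
      field_simp
    have he2 : t^2/(3*(1-t^2)) = 1/(12*y*(y+1)) := by
      rw [htdef]
      rw [div_eq_div_iff (by positivity) (by positivity)]
      field_simp
      ring
    have he3 : 1/(12*y*(y+1)) = 1/(12*y) - 1/(12*(y+1)) := by
      field_simp
      ring
    linarith [hlt.trans_eq (he.trans (by rw [he2, he3]))]

lemma summable_sgf {x : ℝ} (hx : 0 < x) : Summable (fun n : ℕ => sgf (x + n)) := by
  apply summable_of_sum_range_le (c := 1/(12*x))
  · intro n; exact (sgf_bounds (by positivity)).1.le
  · intro n
    calc ∑ i ∈ Finset.range n, sgf (x + i)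
        ≤ ∑ i ∈ Finset.range n, (1/(12*(x+i)) - 1/(12*(x+i+1))) := by
          apply Finset.sum_le_sum
          intro i _
          exact (sgf_bounds (show (0:ℝ) < x + i by positivity)).2.le
      _ = 1/(12*(x+(0:ℕ))) - 1/(12*(x+n)) := by
          rw [← Finset.sum_range_sub' (fun i : ℕ => 1/(12*(x+(i:ℝ))))]
          apply Finset.sum_congr rfl
          intro i _
          push_cast; ring
      _ ≤ 1/(12*x) := by
          have h0 : 0 ≤ 1/(12*(x+(n:ℝ))) := by positivity
          simp only [Nat.cast_zero, add_zero]
          linarith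

noncomputable def smu (x : ℝ) : ℝ := ∑' n : ℕ, sgf (x + n)

lemma smu_rec {x : ℝ} (hx : 0 < x) : smu x = sgf x + smu (x+1) := by
  rw [smu, Summable.tsum_eq_zero_add (summable_sgf hx)]
  congr 1
  · norm_num
  · rw [smu]
    apply tsum_congr
    intro n
    congr 1
    push_cast; ring

lemma smu_pos {x : ℝ} (hx : 0 < x) : 0 < smu x := by
  have h0 : sgf (x + (0:ℕ)) ≤ smu x :=
    Summable.le_tsum (summable_sgf hx) 0 (fun i _ => (sgf_bounds (by positivity)).1.le)
  have := (sgf_bounds hx).1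
  simp only [Nat.cast_zero, add_zero] at h0
  linarith

lemma smu_lt {x : ℝ} (hx : 0 < x) : smu x < 1/(12*x) := by
  have hnn : ∀ n : ℕ, 0 ≤ 1/(12*(x+(n:ℝ))) - 1/(12*(x+(n:ℝ)+1)) := by
    intro n
    have h1 : (0:ℝ) < 12*(x+(n:ℝ)) := by positivity
    have h2 : (0:ℝ) < 12*(x+(n:ℝ)+1) := by positivity
    rw [sub_nonneg, div_le_div_iff₀ h2 h1]
    nlinarith
  have hd : HasSum (fun n : ℕ => 1/(12*(x+n)) - 1/(12*(x+n+1))) (1/(12*x)) := by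
    rw [hasSum_iff_tendsto_nat_of_nonneg hnn]
    have hps : ∀ n : ℕ, ∑ i ∈ Finset.range n, (1/(12*(x+(i:ℝ))) - 1/(12*(x+(i:ℝ)+1)))
        = 1/(12*x) - 1/(12*(x+(n:ℝ))) := by
      intro n
      rw [show (fun i : ℕ => 1/(12*(x+(i:ℝ))) - 1/(12*(x+(i:ℝ)+1)))
          = (fun i : ℕ => (fun j : ℕ => 1/(12*(x+(j:ℝ)))) i - (fun j : ℕ => 1/(12*(x+(j:ℝ)))) (i+1))
          from funext fun i => by push_cast; ring]
      rw [Finset.sum_range_sub' (fun j : ℕ => 1/(12*(x+(j:ℝ))))]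
      norm_num
    simp only [hps]
    have : Tendsto (fun n : ℕ => 1/(12*(x+(n:ℝ)))) atTop (nhds 0) := by
      have h12 : Tendsto (fun n : ℕ => 12*(x+(n:ℝ))) atTop atTop := by
        apply Tendsto.const_mul_atTop (by norm_num : (0:ℝ) < 12)
        exact tendsto_atTop_add_const_left _ x tendsto_natCast_atTop_atTop
      have := h12.inv_tendsto_atTop
      simp only [Pi.inv_def] at this
      simpa [one_div] using this
    simpa using (tendsto_const_nhds (x := 1/(12*x))).sub this
  have hsum2 : Summable (fun n : ℕ => 1/(12*(x+n)) - 1/(12*(x+n+1))) := hd.summable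
  have hlt : smu x < ∑' n : ℕ, (1/(12*(x+n)) - 1/(12*(x+n+1))) := by
    apply Summable.tsum_lt_tsum (i := 0) ?_ ?_ (summable_sgf hx) hsum2
    · intro i
      have := (sgf_bounds (show (0:ℝ) < x + i by positivity)).2
      calc sgf (x + i) ≤ 1/(12*(x+i)) - 1/(12*(x+i+1)) := by
            convert this.le using 2 <;> ring
        _ = _ := rfl
    · have := (sgf_bounds hx).2
      simp only [Nat.cast_zero, add_zero]
      convert this using 3 <;> ring
  rwa [hd.tsum_eq] at hlt


noncomputable def sF (y : ℝ) : ℝ := Real.log (Real.Gamma (y+1))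
noncomputable def sS (y : ℝ) : ℝ := sF y - (y + 1/2) * Real.log y + y

lemma sF_rec {y : ℝ} (hy : 0 < y) : sF (y+1) = Real.log (y+1) + sF y := by
  rw [sF, sF, show y+1+1 = (y+1)+1 from rfl, Real.Gamma_add_one (by positivity : y+1 ≠ 0)]
  rw [Real.log_mul (by positivity) (Real.Gamma_pos_of_pos (by positivity)).ne']

lemma sS_nat_tendsto :
    Tendsto (fun n : ℕ => sS n) atTop (nhds (Real.log (Real.sqrt (2*Real.pi)))) := by
  have hlim : Tendsto (fun n : ℕ => Real.log (Stirling.stirlingSeq n) + (1/2) * Real.log 2)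
      atTop (nhds (Real.log (Real.sqrt Real.pi) + (1/2) * Real.log 2)) := by
    apply Tendsto.add_const
    exact (Stirling.tendsto_stirlingSeq_sqrt_pi.log (by positivity : Real.sqrt Real.pi ≠ 0))
  have heq : ∀ᶠ n : ℕ in atTop, Real.log (Stirling.stirlingSeq n) + (1/2) * Real.log 2 = sS n := by
    filter_upwards [eventually_ge_atTop 1] with n hn
    have hn0 : (0:ℝ) < n := by exact_mod_cast hn
    rw [Stirling.log_stirlingSeq_formula, sS, sF, Real.Gamma_nat_eq_factorial,
      Real.log_mul two_ne_zero hn0.ne', Real.log_div hn0.ne' (Real.exp_pos 1).ne',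
      Real.log_exp]
    ring
  have hL : Real.log (Real.sqrt Real.pi) + (1/2) * Real.log 2 = Real.log (Real.sqrt (2*Real.pi)) := by
    rw [Real.log_sqrt Real.pi_pos.le, Real.log_sqrt (by positivity),
      Real.log_mul two_ne_zero Real.pi_pos.ne']
    ring
  rw [← hL]
  exact hlim.congr' heq

set_option maxHeartbeats 2000000 in
lemma sS_sandwich {y : ℝ} (hy : 1 ≤ y) :
    sS (⌊y⌋₊:ℝ) - (5/2) * (1/(⌊y⌋₊:ℝ)) ≤ sS y ∧ sS y ≤ sS (⌊y⌋₊:ℝ) + 1/(⌊y⌋₊:ℝ) := by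
  set n : ℕ := ⌊y⌋₊ with hn
  set N : ℝ := (n:ℝ) with hN
  have hN1 : 1 ≤ N := by
    rw [hN]; exact_mod_cast Nat.le_floor (by exact_mod_cast hy)
  have hN0 : 0 < N := by linarith
  set t : ℝ := y - N with ht
  have ht0 : 0 ≤ t := by
    rw [ht]; simp only [sub_nonneg, hN, hn]; exact Nat.floor_le (by linarith)
  have ht1 : t < 1 := by
    rw [ht]; have := Nat.lt_floor_add_one y; rw [← hN] at *; linarith [Nat.lt_floor_add_one y]
  have hyNt : y = N + t := by rw [ht]; ring
  clear_value n N t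
  -- basic log estimates
  have hlogN0 : 0 ≤ Real.log N := Real.log_nonneg hN1
  have lemA : Real.log N + t/(N+t) ≤ Real.log (N+t) := by
    have h := Real.log_le_sub_one_of_pos (show (0:ℝ) < N/(N+t) by positivity)
    rw [Real.log_div hN0.ne' (by positivity : N+t ≠ 0)] at h
    have : N/(N+t) - 1 = -t/(N+t) := by field_simp; ring
    rw [this, neg_div] at h
    linarith [h]
  have lemB : Real.log (N+t) ≤ Real.log N + t/N := by
    have h := Real.log_le_sub_one_of_pos (show (0:ℝ) < (N+t)/N by positivity)
    rw [Real.log_div (by positivity : N+t ≠ 0) hN0.ne'] at h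
    have : (N+t)/N - 1 = t/N := by field_simp; ring
    rw [this] at h; linarith
  have lemC : Real.log (N+1+t) ≤ Real.log (N+1) + t/(N+1) := by
    have h := Real.log_le_sub_one_of_pos (show (0:ℝ) < (N+1+t)/(N+1) by positivity)
    rw [Real.log_div (by positivity : N+1+t ≠ 0) (by positivity : N+1 ≠ 0)] at h
    have : (N+1+t)/(N+1) - 1 = t/(N+1) := by field_simp; ring
    rw [this] at h; linarith
  have lemD : Real.log (N+1) - Real.log N ≤ 1/N := by
    have h := Real.log_le_sub_one_of_pos (show (0:ℝ) < (N+1)/N by positivity)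
    rw [Real.log_div (by positivity : N+1 ≠ 0) hN0.ne'] at h
    have : (N+1)/N - 1 = 1/N := by field_simp; ring
    rw [this] at h; linarith
  have lemE : Real.log N ≤ Real.log (N+1) :=
    Real.log_le_log hN0 (by linarith)
  -- convexity bounds
  have hcv := Real.convexOn_log_Gamma.2
  have hup : sF y ≤ (1-t) * sF N + t * sF (N+1) := by
    have h := hcv (Set.mem_Ioi.2 (by linarith : (0:ℝ) < N+1))
      (Set.mem_Ioi.2 (by linarith : (0:ℝ) < N+2))
      (by linarith : (0:ℝ) ≤ 1-t) ht0 (by ring)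
    have e : (1-t) • (N+1) + t • (N+2) = y + 1 := by
      simp only [smul_eq_mul]; rw [hyNt]; ring
    rw [e] at h
    simpa [sF, Function.comp, show N+1+1 = N+2 from by ring] using h
  have hlo : sF N + Real.log (N+1) - (1-t) * Real.log (y+1) ≤ sF y := by
    have h := hcv (Set.mem_Ioi.2 (show (0:ℝ) < y+1 by nlinarith))
      (Set.mem_Ioi.2 (show (0:ℝ) < y+2 by nlinarith))
      ht0 (by linarith : (0:ℝ) ≤ 1-t) (by ring)
    have e : t • (y+1) + (1-t) • (y+2) = N + 2 := by
      simp only [smul_eq_mul]; rw [hyNt]; ring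
    rw [e] at h
    have h2 : sF (N+1) ≤ t * sF y + (1-t) * sF (y+1) := by
      simpa [sF, Function.comp, show N+1+1 = N+2 from by ring,
        show y+1+1 = y+2 from by ring] using h
    have h3 : sF (y+1) = Real.log (y+1) + sF y := sF_rec (by nlinarith)
    have h4 : sF (N+1) = Real.log (N+1) + sF N := sF_rec hN0
    rw [h3, h4] at h2
    nlinarith
  have hF1 : sF (N+1) = Real.log (N+1) + sF N := sF_rec hN0
  have hylog : Real.log y = Real.log (N+t) := by rw [hyNt]
  constructor
  · -- lower bound
    have key : sS y - sS N ≥ t*(Real.log (N+1) - Real.log N) - (1-t)*t/(N+1) - t*(t+1/2)/N := by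
      have e1 : sS y - sS N
          = (sF y - sF N) - (N+t+1/2)*Real.log (N+t) + (N+1/2)*Real.log N + t := by
        rw [sS, sS, hylog, hyNt]; ring
      have e2 : (N+t+1/2)*Real.log (N+t) ≤ (N+1/2)*Real.log N + t*Real.log N + t + t*(t+1/2)/N := by
        have := mul_le_mul_of_nonneg_left lemB (show (0:ℝ) ≤ N+t+1/2 by linarith)
        have e3 : (N+t+1/2)*(Real.log N + t/N) = (N+1/2)*Real.log N + t*Real.log N + t + t*(t+1/2)/N := by
          field_simp; ring
        linarith [this.trans_eq e3]
      have e4 : (1-t)*Real.log (y+1) ≤ (1-t)*Real.log (N+1) + (1-t)*t/(N+1) := by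
        have hy1 : y+1 = N+1+t := by rw [hyNt]; ring
        rw [hy1]
        have h5 := mul_le_mul_of_nonneg_left lemC (show (0:ℝ) ≤ 1-t by linarith)
        have h6 : (1-t)*(Real.log (N+1) + t/(N+1)) = (1-t)*Real.log (N+1) + (1-t)*t/(N+1) := by
          ring
        linarith [h5.trans_eq h6]
      linarith [hlo, e1.ge, e2, e4]
    have b1 : 0 ≤ t*(Real.log (N+1) - Real.log N) :=
      mul_nonneg ht0 (by linarith [lemE])
    have hnum2 : (1-t)*t ≤ 1 := by nlinarith
    have b2 : (1-t)*t/(N+1) ≤ 1/N :=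
      div_le_div₀ (by norm_num : (0:ℝ) ≤ 1) hnum2 hN0 (by linarith : N ≤ N+1)
    have hnum3 : t*(t+1/2) ≤ 3/2 := by nlinarith
    have b3 : t*(t+1/2)/N ≤ (3/2)/N :=
      div_le_div₀ (by norm_num : (0:ℝ) ≤ 3/2) hnum3 hN0 le_rfl
    have b3' : t*(t+1/2)/N ≤ (3/2)*(1/N) := by
      rw [show (3/2)*(1/N) = (3/2)/N from by ring]; exact b3
    linarith [key, b1, b2, b3']
  · -- upper bound
    have key : sS y - sS N ≤ t*(Real.log (N+1) - Real.log N) := by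
      have e1 : sS y - sS N
          = (sF y - sF N) - (N+t+1/2)*Real.log (N+t) + (N+1/2)*Real.log N + t := by
        rw [sS, sS, hylog, hyNt]; ring
      have e2 : (N+1/2)*Real.log N + t*Real.log N + t ≤ (N+t+1/2)*Real.log (N+t) := by
        have h1 := mul_le_mul_of_nonneg_left lemA (show (0:ℝ) ≤ N+t+1/2 by linarith)
        have h2 : t ≤ (N+t+1/2)*(t/(N+t)) := by
          rw [mul_div_assoc', le_div_iff₀ (by linarith : (0:ℝ) < N+t)]
          nlinarith
        have h3 : (N+t+1/2)*(Real.log N + t/(N+t))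
            = (N+t+1/2)*Real.log N + (N+t+1/2)*(t/(N+t)) := by ring
        linarith [h1.trans_eq' h3, h2]
      have e5 : sF y - sF N ≤ t * Real.log (N+1) := by
        rw [hF1] at hup; linarith
      linarith [e1.le, e2, e5]
    have hfin : t*(Real.log (N+1) - Real.log N) ≤ 1/N := by
      have h1 := mul_le_mul_of_nonneg_left lemD ht0
      have h2 : 0 ≤ 1/N := by positivity
      nlinarith
    linarith

lemma sS_tendsto : Tendsto sS atTop (nhds (Real.log (Real.sqrt (2*Real.pi)))) := by
  set L := Real.log (Real.sqrt (2*Real.pi)) with hL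
  have hfl : Tendsto (fun y : ℝ => ⌊y⌋₊) atTop atTop := tendsto_nat_floor_atTop
  have h1 : Tendsto (fun y : ℝ => sS (⌊y⌋₊:ℝ)) atTop (nhds L) := sS_nat_tendsto.comp hfl
  have h2 : Tendsto (fun y : ℝ => 1/((⌊y⌋₊:ℝ))) atTop (nhds 0) :=
    tendsto_one_div_atTop_nhds_zero_nat.comp hfl
  apply tendsto_of_tendsto_of_tendsto_of_le_of_le'
    (g := fun y : ℝ => sS (⌊y⌋₊:ℝ) - (5/2) * (1/(⌊y⌋₊:ℝ)))
    (h := fun y : ℝ => sS (⌊y⌋₊:ℝ) + 1/(⌊y⌋₊:ℝ))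
  · simpa using h1.sub (h2.const_mul (5/2))
  · simpa using h1.add h2
  · filter_upwards [eventually_ge_atTop (1:ℝ)] with y hy using (sS_sandwich hy).1
  · filter_upwards [eventually_ge_atTop (1:ℝ)] with y hy using (sS_sandwich hy).2

lemma smu_tendsto : Tendsto smu atTop (nhds 0) := by
  have h2 : Tendsto (fun y : ℝ => 1/(12*y)) atTop (nhds 0) := by
    have h12 : Tendsto (fun y : ℝ => 12*y) atTop atTop :=
      Tendsto.const_mul_atTop (by norm_num) tendsto_id
    have := h12.inv_tendsto_atTop
    simp only [Pi.inv_def] at this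
    simpa [one_div] using this
  apply tendsto_of_tendsto_of_tendsto_of_le_of_le' tendsto_const_nhds h2
  · filter_upwards [eventually_gt_atTop (0:ℝ)] with y hy using (smu_pos hy).le
  · filter_upwards [eventually_gt_atTop (0:ℝ)] with y hy using (smu_lt hy).le

lemma sS_eq {x : ℝ} (hx : 0 < x) : sS x = Real.log (Real.sqrt (2*Real.pi)) + smu x := by
  set L := Real.log (Real.sqrt (2*Real.pi)) with hL
  set h : ℝ → ℝ := fun y => sS y - smu y with hh
  have hstep : ∀ z : ℝ, 0 < z → h (z+1) = h z := by
    intro z hz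
    have h1 : sF (z+1) = Real.log (z+1) + sF z := sF_rec hz
    have h2 : smu z = sgf z + smu (z+1) := smu_rec hz
    have h3 : sgf z = (z + 1/2) * (Real.log (z+1) - Real.log z) - 1 := rfl
    simp only [hh, sS]
    rw [h1]
    have : smu (z+1) = smu z - sgf z := by linarith
    rw [this, h3]
    ring
  have hiter : ∀ n : ℕ, h (x + n) = h x := by
    intro n
    induction n with
    | zero => norm_num
    | succ k ih =>
      have : x + (k+1 : ℕ) = (x + k) + 1 := by push_cast; ring
      rw [this, hstep _ (by positivity)]
      exact ih
  have hlim : Tendsto (fun n : ℕ => h (x + n)) atTop (nhds L) := by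
    have ha : Tendsto (fun n : ℕ => x + (n:ℝ)) atTop atTop :=
      tendsto_atTop_add_const_left _ x tendsto_natCast_atTop_atTop
    have h0 := (sS_tendsto.sub smu_tendsto).comp ha
    rw [sub_zero] at h0
    exact h0
  have hconst : Tendsto (fun _ : ℕ => h x) atTop (nhds (h x)) := tendsto_const_nhds
  have : h x = L := tendsto_nhds_unique (hconst.congr (fun n => (hiter n).symm)) hlim
  have := this
  simp only [hh] at this
  linarith

theorem stirling_bounds (x : ℝ) (hx : 0 < x) :
    Real.sqrt (2 * Real.pi) * x ^ (x + 1/2) * Real.exp (-x) < Real.Gamma (x + 1) ∧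
    Real.Gamma (x + 1) < Real.sqrt (2 * Real.pi) * x ^ (x + 1/2) * Real.exp (-x + 1/(12*x)) := by
  have hG : Real.Gamma (x+1) = Real.sqrt (2*Real.pi) * x ^ (x + 1/2) * Real.exp (-x + smu x) := by
    have h1 : Real.log (Real.Gamma (x+1)) = Real.log (Real.sqrt (2*Real.pi))
        + (x + 1/2) * Real.log x - x + smu x := by
      have := sS_eq hx
      simp only [sS, sF] at this
      linarith
    have hGpos : 0 < Real.Gamma (x+1) := Real.Gamma_pos_of_pos (by linarith)
    rw [← Real.exp_log hGpos, h1]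
    rw [show Real.log (Real.sqrt (2*Real.pi)) + (x + 1/2) * Real.log x - x + smu x
      = Real.log (Real.sqrt (2*Real.pi)) + (x + 1/2) * Real.log x + (-x + smu x) from by ring]
    rw [Real.exp_add, Real.exp_add, Real.exp_log (by positivity),
      Real.rpow_def_of_pos hx, mul_comm (Real.log x)]
  have hpos : 0 < Real.sqrt (2*Real.pi) * x ^ (x + 1/2) := by positivity
  constructor
  · rw [hG]
    have : Real.exp (-x) < Real.exp (-x + smu x) :=
      Real.exp_lt_exp.2 (by linarith [smu_pos hx])
    rw [mul_assoc, mul_assoc]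
    exact mul_lt_mul_of_pos_left (by
      exact mul_lt_mul_of_pos_left this (by positivity)) (Real.sqrt_pos.2 (by positivity))
  · rw [hG]
    have : Real.exp (-x + smu x) < Real.exp (-x + 1/(12*x)) :=
      Real.exp_lt_exp.2 (by linarith [smu_lt hx])
    rw [mul_assoc, mul_assoc]
    exact mul_lt_mul_of_pos_left (by
      exact mul_lt_mul_of_pos_left this (by positivity)) (Real.sqrt_pos.2 (by positivity))
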